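/- Let G be a graph and let e_1, ..., e_p (p ≥ 1) be distinct edges of G. Then e_1, ..., e_p are the consecutive vertices of an induced path in the line graph L(G) if and only if there exist distinct vertices v_0, v_1, ..., v_p of G such that e_i is the edge joining v_{i-1} and v_i for every i (i.e., e_1, ..., e_p are the consecutive edges of a path in G). -/

import Mathlib

/-- `l` is the list of consecutive vertices of an induced path of `G`:
its vertices are distinct and two of them are adjacent in `G` exactly when
they are consecutive in `l`. -/
def IsInducedPathList {V : Type*} (G : SimpleGraph V) (l : List V) : Prop :=
  l.Nodup ∧ ∀ i j : Fin l.length,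
    G.Adj (l.get i) (l.get j) ↔ (i.1 + 1 = j.1 ∨ j.1 + 1 = i.1)

open SimpleGraph in
/-- Extension step: if the first `p+1` of `p+2` edges form a path on vertices `v`, and the
last vertex of `v` lies on the last edge, then all edges form a path. -/
lemma extend_lemma {V : Type*} {G : SimpleGraph V} {p : ℕ}
    (e : Fin (p + 2) → G.edgeSet) (he : Function.Injective e)
    (hadj : ∀ i j : Fin (p + 2), G.lineGraph.Adj (e i) (e j) ↔ (i.1 + 1 = j.1 ∨ j.1 + 1 = i.1))
    (v : Fin (p + 2) → V) (hv : Function.Injective v)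
    (hve : ∀ i : Fin (p + 1), (e i.castSucc : Sym2 V) = s(v i.castSucc, v i.succ))
    (hw : v (Fin.last (p + 1)) ∈ (e (Fin.last (p + 1)) : Sym2 V)) :
    ∃ v' : Fin (p + 3) → V, Function.Injective v' ∧
      ∀ i : Fin (p + 2), (e i : Sym2 V) = s(v' i.castSucc, v' i.succ) := by
  obtain ⟨u, hu⟩ := Sym2.mem_iff_exists.mp hw
  have hadjlast : G.Adj (v (Fin.last (p + 1))) u := by
    have h2 := (e (Fin.last (p + 1))).2
    rw [hu] at h2
    exact h2
  have hune : ∀ j : Fin (p + 2), u ≠ v j := by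
    intro j huj
    induction j using Fin.lastCases with
    | last => exact (G.ne_of_adj hadjlast).symm (by rw [huj])
    | cast k =>
      -- u = v k.castSucc lies on edge e k.castSucc
      have hmem : u ∈ (e k.castSucc : Sym2 V) := by
        rw [hve k, huj]; exact Sym2.mem_mk_left _ _
      have hne : e k.castSucc ≠ e (Fin.last (p + 1)) := by
        intro h
        have := he h
        have : k.castSucc.1 = (Fin.last (p + 1)).1 := by rw [this]
        simp [Fin.last] at this
        omega
      have hAdj : G.lineGraph.Adj (e k.castSucc) (e (Fin.last (p + 1))) := by
        rw [lineGraph_adj_iff_exists]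
        refine ⟨hne, u, hmem, ?_⟩
        rw [hu]; exact Sym2.mem_mk_right _ _
      have hcons := (hadj _ _).mp hAdj
      simp only [Fin.coe_castSucc, Fin.val_last] at hcons
      have hk : k.1 = p := by omega
      -- then e last = s(v last, v ⟨p⟩) = e ⟨p⟩, contradicting injectivity
      have hkval : k = Fin.last p := Fin.ext hk
      subst hkval
      have heq : (e (Fin.last p).castSucc : Sym2 V) = (e (Fin.last (p + 1)) : Sym2 V) := by
        rw [hve (Fin.last p), hu, huj, Fin.succ_last]
        exact Sym2.eq_swap
      have : (Fin.last p).castSucc = Fin.last (p + 1) := he (Subtype.ext heq)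
      have : ((Fin.last p).castSucc).1 = (Fin.last (p + 1)).1 := by rw [this]
      simp at this
  refine ⟨Fin.snoc v u, ?_, ?_⟩
  · intro a b hab
    induction a using Fin.lastCases with
    | last =>
      induction b using Fin.lastCases with
      | last => rfl
      | cast b' =>
        rw [Fin.snoc_last, Fin.snoc_castSucc] at hab
        exact absurd hab (hune b')
    | cast a' =>
      induction b using Fin.lastCases with
      | last =>
        rw [Fin.snoc_last, Fin.snoc_castSucc] at hab
        exact absurd hab.symm (hune a')
      | cast b' =>
        rw [Fin.snoc_castSucc, Fin.snoc_castSucc] at hab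
        rw [hv hab]
  · intro i
    induction i using Fin.lastCases with
    | last =>
      rw [Fin.succ_last, Fin.snoc_last, Fin.snoc_castSucc]
      exact hu
    | cast k =>
      rw [Fin.succ_castSucc, Fin.snoc_castSucc, Fin.snoc_castSucc]
      exact hve k

open SimpleGraph in
lemma aux_lemma {V : Type*} {G : SimpleGraph V} :
    ∀ (p : ℕ) (e : Fin (p + 1) → G.edgeSet), Function.Injective e →
    (∀ i j : Fin (p + 1), G.lineGraph.Adj (e i) (e j) ↔ (i.1 + 1 = j.1 ∨ j.1 + 1 = i.1)) →
    ∃ v : Fin (p + 2) → V, Function.Injective v ∧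
      ∀ i : Fin (p + 1), (e i : Sym2 V) = s(v i.castSucc, v i.succ) := by
  intro p
  induction p with
  | zero =>
    intro e he hadj
    obtain ⟨⟨a, b⟩, hab⟩ := Quot.exists_rep (e 0 : Sym2 V)
    have hab' : (e 0 : Sym2 V) = s(a, b) := hab.symm
    have hAdj : G.Adj a b := by
      have := (e 0).2
      rw [hab'] at this
      exact this
    have hne := G.ne_of_adj hAdj
    refine ⟨![a, b], ?_, ?_⟩
    · intro i j hij
      fin_cases i <;> fin_cases j <;> simp_all
    · intro i
      fin_cases i
      simpa using hab'
  | succ q ih =>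
    intro e he hadj
    have he'inj : Function.Injective (fun i : Fin (q + 1) => e i.castSucc) :=
      fun a b h => Fin.castSucc_injective _ (he h)
    obtain ⟨v, hv, hve⟩ := ih (fun i => e i.castSucc) he'inj
      (fun i j => by simpa using hadj i.castSucc j.castSucc)
    have hA : G.lineGraph.Adj (e (Fin.last q).castSucc) (e (Fin.last (q + 1))) :=
      (hadj _ _).mpr (Or.inl (by simp))
    rw [lineGraph_adj_iff_exists] at hA
    obtain ⟨-, w, hw1, hw2⟩ := hA
    rw [hve (Fin.last q)] at hw1
    rcases Sym2.mem_iff.mp hw1 with h1 | h1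
    · -- w = v (last q).castSucc : the "bad" end
      rcases q with _ | r
      · -- q = 0 : flip the orientation of v
        have hv01 : v 0 ≠ v 1 := fun h => by simpa using hv h
        have hwv : w = v 0 := by
          have h0 : (Fin.last 0).castSucc = (0 : Fin 2) := rfl
          rw [h0] at h1; exact h1
        refine extend_lemma e he hadj ![v 1, v 0] ?_ ?_ ?_
        · intro i j hij
          fin_cases i <;> fin_cases j <;> simp_all
        · intro i
          have hi : i = 0 := Fin.eq_zero i
          subst hi
          show (e ((0 : Fin 1).castSucc) : Sym2 V) = s(v 1, v 0)
          rw [hve 0]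
          exact Sym2.eq_swap
        · show v 0 ∈ (e (Fin.last 1) : Sym2 V)
          rw [← hwv]
          exact hw2
      · -- q = r + 1 ≥ 1 : contradiction
        exfalso
        -- w = v ⟨q⟩ also lies on edge ⟨r⟩
        have hmem : w ∈ (e ((⟨r, by omega⟩ : Fin (r + 2)).castSucc) : Sym2 V) := by
          rw [hve ⟨r, by omega⟩, h1]
          have : (⟨r, by omega⟩ : Fin (r + 2)).succ = (Fin.last (r + 1)).castSucc := by
            apply Fin.ext; simp [Fin.last]
          rw [this]
          exact Sym2.mem_mk_right _ _
        have hne : e ((⟨r, by omega⟩ : Fin (r + 2)).castSucc) ≠ e (Fin.last (r + 2)) := by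
          intro h
          have := he h
          have : ((⟨r, by omega⟩ : Fin (r + 2)).castSucc).1 = (Fin.last (r + 2)).1 := by rw [this]
          simp [Fin.last] at this
        have hAdj2 : G.lineGraph.Adj (e ((⟨r, by omega⟩ : Fin (r + 2)).castSucc))
            (e (Fin.last (r + 2))) := by
          rw [lineGraph_adj_iff_exists]
          exact ⟨hne, w, hmem, hw2⟩
        have := (hadj _ _).mp hAdj2
        simp [Fin.last] at this
        omega
    · exact extend_lemma e he hadj v hv hve (h1 ▸ hw2)

/-- Distinct edges `e 0, …, e (p-1)` of `G` (with `p ≥ 1`) are the consecutive vertices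
of an induced path of the line graph `L(G)` if and only if there are distinct vertices
`v 0, …, v p` of `G` such that `e i` joins `v i` and `v (i+1)` for every `i`, i.e. the
`e i` are the consecutive edges of a path of `G`. -/
theorem stmt13 {V : Type*} (G : SimpleGraph V) {p : ℕ} (hp : 1 ≤ p)
    (e : Fin p → G.edgeSet) (he : Function.Injective e) :
    IsInducedPathList G.lineGraph (List.ofFn e) ↔
      ∃ v : Fin (p + 1) → V, Function.Injective v ∧
        ∀ i : Fin p, (e i : Sym2 V) = s(v i.castSucc, v i.succ) := by
  obtain ⟨q, rfl⟩ : ∃ q, p = q + 1 := ⟨p - 1, (Nat.succ_pred_eq_of_pos hp).symm⟩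
  have hlen : (List.ofFn e).length = q + 1 := List.length_ofFn (f := e)
  constructor
  · rintro ⟨hnd, hadj⟩
    apply aux_lemma q e he
    intro i j
    have := hadj (Fin.cast hlen.symm i) (Fin.cast hlen.symm j)
    rw [List.get_ofFn, List.get_ofFn] at this
    exact this
  · rintro ⟨v, hv, hve⟩
    refine ⟨List.nodup_ofFn.mpr he, ?_⟩
    intro i j
    rw [List.get_ofFn, List.get_ofFn, SimpleGraph.lineGraph_adj_iff_exists]
    set i' := Fin.cast (List.length_ofFn (f := e)) i with hi'
    set j' := Fin.cast (List.length_ofFn (f := e)) j with hj'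
    have hii : i'.1 = i.1 := rfl
    have hjj : j'.1 = j.1 := rfl
    constructor
    · rintro ⟨hne, w, hwi, hwj⟩
      rw [hve i'] at hwi
      rw [hve j'] at hwj
      have hne' : i' ≠ j' := fun h => hne (by rw [h])
      rcases Sym2.mem_iff.mp hwi with h1 | h1 <;> rcases Sym2.mem_iff.mp hwj with h2 | h2
      · exact absurd (Fin.castSucc_injective _ (hv (h1.symm.trans h2))) hne'
      · have := hv (h1.symm.trans h2)
        have : i'.castSucc.1 = j'.succ.1 := by rw [this]
        simp at this
        omega
      · have := hv (h1.symm.trans h2)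
        have : i'.succ.1 = j'.castSucc.1 := by rw [this]
        simp at this
        omega
      · exact absurd (Fin.succ_injective _ (hv (h1.symm.trans h2))) hne'
    · rintro (h | h)
      · have hne' : i' ≠ j' := by
          intro hh
          have : i'.1 = j'.1 := by rw [hh]
          omega
        refine ⟨fun hh => hne' (he hh), v i'.succ, ?_, ?_⟩
        · rw [hve i']; exact Sym2.mem_mk_right _ _
        · rw [hve j']
          have : i'.succ = j'.castSucc := by
            apply Fin.ext; simp; omega
          rw [this]
          exact Sym2.mem_mk_left _ _
      · have hne' : i' ≠ j' := by
          intro hh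
          have : i'.1 = j'.1 := by rw [hh]
          omega
        refine ⟨fun hh => hne' (he hh), v j'.succ, ?_, ?_⟩
        · rw [hve i']
          have : j'.succ = i'.castSucc := by
            apply Fin.ext; simp; omega
          rw [this]
          exact Sym2.mem_mk_left _ _
        · rw [hve j']; exact Sym2.mem_mk_right _ _
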